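/- For every connected graph G, the burning number satisfies b(G) ≤ b_g(G) ≤ min{CL(G), 2·b(G²) − 1}, where b_g is the Burner-start game burning number, CL is the cooling number, and G² is the square of G. -/

import Mathlib

namespace BurningGame

/-- One spreading phase: all neighbors of burned vertices become burned. -/
noncomputable def spread {V : Type*} [Fintype V] [DecidableEq V] (G : SimpleGraph V) (B : Finset V) : Finset V :=
  ((↑B : Set V) ∪ {v | ∃ u ∈ B, G.Adj u v}).toFinite.toFinset

/-- `EndBy G turn i B k`: starting from burned set `B` at round index `i`
(the player selecting in round `i` is Burner iff `turn i = true`; Burner's selections are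
quantified existentially, Staller's universally), Burner can force the game to end
within `k` further rounds. -/
def EndBy {V : Type*} [Fintype V] [DecidableEq V] (G : SimpleGraph V) (turn : ℕ → Bool) :
    ℕ → Finset V → ℕ → Prop
  | _, B, 0 => B = Finset.univ
  | i, B, k + 1 => B = Finset.univ ∨
      spread G B = Finset.univ ∨
      (if turn i then ∃ v ∉ spread G B, EndBy G turn (i + 1) (insert v (spread G B)) k
       else ∀ v ∉ spread G B, EndBy G turn (i + 1) (insert v (spread G B)) k)

/-- Game burning number relative to a preburned set `S` (Burner starts). -/
noncomputable def bgRel {V : Type*} [Fintype V] [DecidableEq V] (G : SimpleGraph V) (S : Finset V) : ℕ :=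
  sInf {k | EndBy G (fun i => i % 2 == 0) 0 S k}

/-- The game burning number (Burner starts). -/
noncomputable def bg {V : Type*} [Fintype V] [DecidableEq V] (G : SimpleGraph V) : ℕ := bgRel G ∅

/-- The Staller-start game burning number. -/
noncomputable def bg' {V : Type*} [Fintype V] [DecidableEq V] (G : SimpleGraph V) : ℕ :=
  sInf {k | EndBy G (fun i => i % 2 == 1) 0 ∅ k}

/-- The burning number: only Burner plays. -/
noncomputable def burn {V : Type*} [Fintype V] [DecidableEq V] (G : SimpleGraph V) : ℕ :=
  sInf {k | EndBy G (fun _ => true) 0 ∅ k}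

/-- The cooling number: only Staller plays. -/
noncomputable def cool {V : Type*} [Fintype V] [DecidableEq V] (G : SimpleGraph V) : ℕ :=
  sInf {k | EndBy G (fun _ => false) 0 ∅ k}


/-- The square of a graph: vertices at distance at most 2 are adjacent. -/
def square {V : Type*} (G : SimpleGraph V) : SimpleGraph V where
  Adj u v := G.Adj u v ∨ (u ≠ v ∧ ∃ w, G.Adj u w ∧ G.Adj w v)
  symm := by
    constructor
    intro u v h
    rcases h with h | ⟨hne, w, h1, h2⟩
    · exact Or.inl h.symm
    · exact Or.inr ⟨hne.symm, w, h2.symm, h1.symm⟩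
  loopless := by
    constructor
    intro u h
    rcases h with h | ⟨hne, _⟩
    · exact G.irrefl h
    · exact hne rfl

section Lemmas

variable {V : Type*} [Fintype V] [DecidableEq V] (G : SimpleGraph V)

lemma mem_spread {B : Finset V} {v : V} :
    v ∈ spread G B ↔ v ∈ B ∨ ∃ u ∈ B, G.Adj u v := by
  simp [spread]

lemma subset_spread (B : Finset V) : B ⊆ spread G B :=
  fun _ hv => (mem_spread G).2 (Or.inl hv)

lemma spread_mono {B B' : Finset V} (h : B ⊆ B') : spread G B ⊆ spread G B' := by
  intro v hv
  rcases (mem_spread G).1 hv with h1 | ⟨u, hu, ha⟩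
  · exact (mem_spread G).2 (Or.inl (h h1))
  · exact (mem_spread G).2 (Or.inr ⟨u, h hu, ha⟩)

lemma spread_square_subset (B : Finset V) :
    spread (square G) B ⊆ spread G (spread G B) := by
  intro v hv
  rcases (mem_spread (square G)).1 hv with h1 | ⟨u, hu, ha⟩
  · exact subset_spread G _ (subset_spread G _ h1)
  · rcases ha with h | ⟨_, w, h1, h2⟩
    · exact subset_spread G _ ((mem_spread G).2 (Or.inr ⟨u, hu, h⟩))
    · exact (mem_spread G).2 (Or.inr ⟨w, (mem_spread G).2 (Or.inr ⟨u, hu, h1⟩), h2⟩)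

/-- The game always ends within `k` rounds if at most `k` vertices are unburned. -/
lemma endBy_of_card (turn : ℕ → Bool) :
    ∀ (k i : ℕ) (B : Finset V), Fintype.card V ≤ B.card + k → EndBy G turn i B k := by
  intro k
  induction k with
  | zero =>
    intro i B h
    exact Finset.eq_univ_of_card B (le_antisymm (Finset.card_le_univ B) (by simpa using h))
  | succ k ih =>
    intro i B h
    by_cases hs : spread G B = Finset.univ
    · exact Or.inr (Or.inl hs)
    refine Or.inr (Or.inr ?_)
    have hcard : ∀ v ∉ spread G B,
        Fintype.card V ≤ (insert v (spread G B)).card + k := by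
      intro v hv
      have h1 : B.card ≤ (spread G B).card := Finset.card_le_card (subset_spread G B)
      have h2 : (insert v (spread G B)).card = (spread G B).card + 1 :=
        Finset.card_insert_of_notMem hv
      omega
    by_cases hturn : turn i = true
    · rw [if_pos hturn]
      obtain ⟨v, hv⟩ : ∃ v, v ∉ spread G B := by
        by_contra hc
        push_neg at hc
        exact hs (Finset.eq_univ_iff_forall.2 hc)
      exact ⟨v, hv, ih (i + 1) _ (hcard v hv)⟩
    · rw [if_neg hturn]
      intro v hv
      exact ih (i + 1) _ (hcard v hv)

/-- Monotonicity in the turn function: giving more turns to Burner helps Burner. -/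
lemma endBy_mono_turn {turn turn' : ℕ → Bool}
    (hturn : ∀ j, turn j = true → turn' j = true) :
    ∀ (k i : ℕ) (B : Finset V), EndBy G turn i B k → EndBy G turn' i B k := by
  intro k
  induction k with
  | zero => intro i B h; exact h
  | succ k ih =>
    intro i B h
    rcases h with h | h | h
    · exact Or.inl h
    · exact Or.inr (Or.inl h)
    by_cases hs : spread G B = Finset.univ
    · exact Or.inr (Or.inl hs)
    refine Or.inr (Or.inr ?_)
    by_cases hti : turn i = true
    · rw [if_pos hti] at h
      rw [if_pos (hturn i hti)]
      obtain ⟨v, hv, hE⟩ := h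
      exact ⟨v, hv, ih _ _ hE⟩
    · rw [if_neg hti] at h
      by_cases hti' : turn' i = true
      · rw [if_pos hti']
        obtain ⟨v, hv⟩ : ∃ v, v ∉ spread G B := by
          by_contra hc
          push_neg at hc
          exact hs (Finset.eq_univ_iff_forall.2 hc)
        exact ⟨v, hv, ih _ _ (h v hv)⟩
      · rw [if_neg hti']
        intro v hv
        exact ih _ _ (h v hv)

/-- Key lemma: Burner can simulate an optimal burning of `G²` in the game on `G`. -/
lemma key : ∀ (k : ℕ) (B B' : Finset V) (i j : ℕ), i % 2 = 0 →
    EndBy (square G) (fun _ => true) j B (k + 1) →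
    spread (square G) B ⊆ spread G B' →
    EndBy G (fun n => n % 2 == 0) i B' (2 * k + 1) := by
  intro k
  induction k with
  | zero =>
    intro B B' i j hi h hinv
    rcases h with h | h | h
    · refine Or.inr (Or.inl ?_)
      apply Finset.eq_univ_of_forall
      intro v
      exact hinv (subset_spread _ B (h ▸ Finset.mem_univ v))
    · refine Or.inr (Or.inl ?_)
      apply Finset.eq_univ_of_forall
      intro v
      exact hinv (h ▸ Finset.mem_univ v)
    · have hcond : ((fun _ : ℕ => (true : Bool)) j) = true := rfl
      rw [if_pos hcond] at h
      obtain ⟨v, hv, hE⟩ := h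
      have hE : insert v (spread (square G) B) = Finset.univ := hE
      by_cases hvB : v ∈ spread G B'
      · refine Or.inr (Or.inl ?_)
        apply Finset.eq_univ_of_forall
        intro w
        have := hE ▸ Finset.mem_univ w
        rcases Finset.mem_insert.1 this with rfl | hw
        · exact hvB
        · exact hinv hw
      · refine Or.inr (Or.inr ?_)
        have hcond2 : ((fun n : ℕ => n % 2 == 0) i = true) := by simp [hi]
        rw [if_pos hcond2]
        refine ⟨v, hvB, ?_⟩
        show insert v (spread G B') = Finset.univ
        apply Finset.eq_univ_of_forall
        intro w
        have := hE ▸ Finset.mem_univ w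
        rcases Finset.mem_insert.1 this with rfl | hw
        · exact Finset.mem_insert_self _ _
        · exact Finset.mem_insert_of_mem (hinv hw)
  | succ k ih =>
    intro B B' i j hi h hinv
    rcases h with h | h | h
    · refine Or.inr (Or.inl ?_)
      apply Finset.eq_univ_of_forall
      intro v
      exact hinv (subset_spread _ B (h ▸ Finset.mem_univ v))
    · refine Or.inr (Or.inl ?_)
      apply Finset.eq_univ_of_forall
      intro v
      exact hinv (h ▸ Finset.mem_univ v)
    · have hcond : ((fun _ : ℕ => (true : Bool)) j) = true := rfl
      rw [if_pos hcond] at h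
      obtain ⟨v, hv, hE⟩ := h
      by_cases hu : spread G B' = Finset.univ
      · exact Or.inr (Or.inl hu)
      refine Or.inr (Or.inr ?_)
      have hcond2 : ((fun n : ℕ => n % 2 == 0) i = true) := by simp [hi]
      rw [if_pos hcond2]
      -- choose Burner's vertex
      obtain ⟨v', hv', hvsub⟩ : ∃ v', v' ∉ spread G B' ∧
          insert v (spread G B') ⊆ insert v' (spread G B') := by
        by_cases hvB : v ∈ spread G B'
        · obtain ⟨w, hw⟩ : ∃ w, w ∉ spread G B' := by
            by_contra hc
            push_neg at hc
            exact hu (Finset.eq_univ_iff_forall.2 hc)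
          refine ⟨w, hw, ?_⟩
          intro x hx
          rcases Finset.mem_insert.1 hx with rfl | hx
          · exact Finset.mem_insert_of_mem hvB
          · exact Finset.mem_insert_of_mem hx
        · exact ⟨v, hvB, le_refl _⟩
      refine ⟨v', hv', ?_⟩
      -- Staller's round: 2*(k+1)+1 = (2*k+2)+1, remaining 2*k+2 = (2*k+1)+1
      have h2 : 2 * (k + 1) = 2 * k + 1 + 1 := by ring
      rw [h2]
      refine Or.inr (Or.inr ?_)
      have hcond3 : ¬ ((fun n : ℕ => n % 2 == 0) (i + 1) = true) := by
        simp [Nat.add_mod, hi]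
      rw [if_neg hcond3]
      intro w hw
      set B1 : Finset V := insert v' (spread G B') with hB1
      refine ih (insert v (spread (square G) B)) (insert w (spread G B1)) (i + 2) (j + 1)
        (by omega) hE ?_
      -- invariant for the next stage
      have step1 : insert v (spread (square G) B) ⊆ B1 := by
        intro x hx
        rcases Finset.mem_insert.1 hx with rfl | hx
        · exact hvsub (Finset.mem_insert_self _ _)
        · exact hvsub (Finset.mem_insert_of_mem (hinv hx))
      calc spread (square G) (insert v (spread (square G) B))
          ⊆ spread G (spread G (insert v (spread (square G) B))) :=
            spread_square_subset G _
        _ ⊆ spread G (spread G B1) := spread_mono G (spread_mono G step1)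
        _ ⊆ spread G (insert w (spread G B1)) :=
            spread_mono G (Finset.subset_insert _ _)

end Lemmas

theorem stmt0 {V : Type*} [Fintype V] [DecidableEq V] (G : SimpleGraph V)
    (hG : G.Connected) :
    burn G ≤ bg G ∧ bg G ≤ min (cool G) (2 * burn (square G) - 1) := by
  have hne_bg : {k | EndBy G (fun i => i % 2 == 0) 0 (∅ : Finset V) k}.Nonempty :=
    ⟨Fintype.card V, endBy_of_card G _ _ _ _ (by simp)⟩
  have hne_cool : {k | EndBy G (fun _ => false) 0 (∅ : Finset V) k}.Nonempty :=
    ⟨Fintype.card V, endBy_of_card G _ _ _ _ (by simp)⟩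
  have hne_burn2 : {k | EndBy (square G) (fun _ => true) 0 (∅ : Finset V) k}.Nonempty :=
    ⟨Fintype.card V, endBy_of_card (square G) _ _ _ _ (by simp)⟩
  constructor
  · -- burn G ≤ bg G
    have hmem : bg G ∈ {k | EndBy G (fun i => i % 2 == 0) 0 (∅ : Finset V) k} :=
      Nat.sInf_mem hne_bg
    exact Nat.sInf_le (endBy_mono_turn G (fun _ _ => rfl) _ _ _ hmem)
  · refine le_min ?_ ?_
    · -- bg G ≤ cool G
      have hmem : cool G ∈ {k | EndBy G (fun _ => false) 0 (∅ : Finset V) k} :=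
        Nat.sInf_mem hne_cool
      exact Nat.sInf_le (endBy_mono_turn G (by simp) _ _ _ hmem)
    · -- bg G ≤ 2 * burn (square G) - 1
      have hmem : burn (square G) ∈
          {k | EndBy (square G) (fun _ => true) 0 (∅ : Finset V) k} :=
        Nat.sInf_mem hne_burn2
      have hpos : 1 ≤ burn (square G) := by
        rcases Nat.eq_zero_or_pos (burn (square G)) with h0 | h
        · exfalso
          rw [h0] at hmem
          have h1 : (∅ : Finset V) = Finset.univ := hmem
          haveI : Nonempty V := hG.nonempty
          have h2 : 0 < Fintype.card V := Fintype.card_pos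
          have h3 : (Finset.univ : Finset V).card = 0 := by
            rw [← h1]; simp
          rw [Finset.card_univ] at h3
          omega
        · exact h
      obtain ⟨m, hm⟩ : ∃ m, burn (square G) = m + 1 := ⟨burn (square G) - 1, by omega⟩
      rw [hm] at hmem
      have hkey := key G m ∅ ∅ 0 0 rfl hmem (by
        intro x hx
        rcases (mem_spread (square G)).1 hx with h1 | ⟨u, hu, _⟩ <;> simp_all)
      have : bg G ≤ 2 * m + 1 := Nat.sInf_le hkey
      omega

end BurningGame
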